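/- Failure of the strong comparison principle in one dimension: For the generalized Dirichlet problem for the prescribed Gaussian curvature equation −u'' + (1 + (u')²)^{3/2} = 0 on (0,1) with boundary conditions u(0) = −1, u(1) = 1, the function u defined by u(x) = −√(1 − x²) for x ∈ [0,1) and u(1) = 1 is a viscosity subsolution, the function v(x) = −√(1 − x²) on [0,1] is a viscosity supersolution, and u(1) = 1 > 0 = v(1); hence there exist a viscosity subsolution and a viscosity supersolution of the generalized Dirichlet problem with the subsolution strictly exceeding the supersolution at a point of [0,1]. -/

import Mathlib

open scoped Classical
open Real Set Filter Topology

noncomputable def gfun (x : ℝ) : ℝ := x / Real.sqrt (1 - x ^ 2)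

lemma sq_lt' (x : ℝ) (hx : x ∈ Set.Ioo (-1:ℝ) 1) : 0 < 1 - x ^ 2 := by
  nlinarith [hx.1, hx.2]

lemma hv_deriv' {x : ℝ} (hx : x ∈ Set.Ioo (-1:ℝ) 1) :
    HasDerivAt (fun y : ℝ => -Real.sqrt (1 - y ^ 2)) (gfun x) x := by
  have ht : 0 < 1 - x ^ 2 := sq_lt' x hx
  have hs : 0 < Real.sqrt (1 - x ^ 2) := Real.sqrt_pos.2 ht
  have h1 : HasDerivAt (fun y : ℝ => 1 - y ^ 2) (-(2 * x)) x := by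
    simpa using (hasDerivAt_pow 2 x).const_sub 1
  have h2 := (Real.hasDerivAt_sqrt ht.ne').comp x h1
  have h3 : HasDerivAt (fun y : ℝ => -Real.sqrt (1 - y ^ 2))
      (-(1 / (2 * Real.sqrt (1 - x ^ 2)) * -(2 * x))) x := h2.neg
  convert h3 using 1
  unfold gfun
  field_simp

lemma hg_deriv' {x : ℝ} (hx : x ∈ Set.Ioo (-1:ℝ) 1) :
    HasDerivAt gfun ((Real.sqrt (1 - x ^ 2))⁻¹ ^ 3) x := by
  have ht : 0 < 1 - x ^ 2 := sq_lt' x hx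
  have hs : 0 < Real.sqrt (1 - x ^ 2) := Real.sqrt_pos.2 ht
  have h1 : HasDerivAt (fun y : ℝ => 1 - y ^ 2) (-(2 * x)) x := by
    simpa using (hasDerivAt_pow 2 x).const_sub 1
  have h2 : HasDerivAt (fun y : ℝ => Real.sqrt (1 - y ^ 2))
      (1 / (2 * Real.sqrt (1 - x ^ 2)) * -(2 * x)) x :=
    (Real.hasDerivAt_sqrt ht.ne').comp x h1
  have h3 : HasDerivAt (fun y : ℝ => y / Real.sqrt (1 - y ^ 2))
      ((1 * Real.sqrt (1 - x ^ 2) - x * (1 / (2 * Real.sqrt (1 - x ^ 2)) * -(2 * x))) /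
        Real.sqrt (1 - x ^ 2) ^ 2) x := (hasDerivAt_id x).div h2 hs.ne'
  convert h3 using 1
  · rfl
  set t := Real.sqrt (1 - x ^ 2) with htdef
  have hss : t * t = 1 - x ^ 2 := Real.mul_self_sqrt ht.le
  field_simp
  linear_combination (-1) * hss

lemma veq' {x : ℝ} (hx : x ∈ Set.Ioo (-1:ℝ) 1) :
    (1 + gfun x ^ 2) ^ ((3:ℝ)/2) = (Real.sqrt (1 - x ^ 2))⁻¹ ^ 3 := by
  have ht : 0 < 1 - x ^ 2 := sq_lt' x hx
  have hs : 0 < Real.sqrt (1 - x ^ 2) := Real.sqrt_pos.2 ht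
  set t := Real.sqrt (1 - x ^ 2) with htdef
  have hss : t * t = 1 - x ^ 2 := Real.mul_self_sqrt ht.le
  have h1 : 1 + gfun x ^ 2 = (t⁻¹) ^ 2 := by
    unfold gfun
    rw [← htdef]
    field_simp
    linear_combination hss
  rw [h1]
  have ha : (0:ℝ) ≤ t⁻¹ := by positivity
  rw [← Real.rpow_natCast t⁻¹ 2, ← Real.rpow_mul ha, ← Real.rpow_natCast t⁻¹ 3]
  norm_num

lemma second_test_max {f f' : ℝ → ℝ} {a b : ℝ}
    (hf : ∀ᶠ x in 𝓝 a, HasDerivAt f (f' x) x)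
    (hf' : HasDerivAt f' b a)
    (hmax : IsLocalMax f a) : f' a = 0 ∧ b ≤ 0 := by
  have ha : f' a = 0 := hmax.hasDerivAt_eq_zero hf.self_of_nhds
  refine ⟨ha, ?_⟩
  by_contra hb
  push_neg at hb
  have hs := hasDerivAt_iff_tendsto_slope.1 hf'
  have hpos : ∀ᶠ x in 𝓝[>] a, 0 < f' x := by
    have h1 : ∀ᶠ x in 𝓝[≠] a, 0 < slope f' a x :=
      hs.eventually (eventually_gt_nhds hb)
    have h2 : ∀ᶠ x in 𝓝[>] a, 0 < slope f' a x :=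
      h1.filter_mono (nhdsWithin_mono a fun x hx => ne_of_gt hx)
    filter_upwards [h2, self_mem_nhdsWithin] with x hx hx'
    have hxa : (0:ℝ) < x - a := sub_pos.2 hx'
    rw [slope_def_field] at hx
    have : 0 < f' x - f' a := by
      have := mul_pos hx hxa
      rwa [div_mul_cancel₀] at this
      · exact hxa.ne'
    simpa [ha] using this
  have hmax' : ∀ᶠ x in 𝓝 a, f x ≤ f a := hmax
  obtain ⟨e1, he1, H1⟩ := Metric.eventually_nhds_iff.1 hf
  obtain ⟨e2, he2, H2⟩ := Metric.eventually_nhds_iff.1 (hmax' )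
  obtain ⟨u, hu, H3⟩ := mem_nhdsGT_iff_exists_Ioo_subset.1 hpos
  set δ : ℝ := min (min e1 e2) (u - a) / 2 with hδ
  have hδpos : 0 < δ := by
    have : 0 < u - a := sub_pos.2 hu
    positivity
  have hsub : Set.Icc a (a + δ) ⊆ Metric.ball a e1 := by
    intro x hx
    rw [Metric.mem_ball, Real.dist_eq, abs_lt]
    constructor <;> [skip; skip] <;>
      · have h1 := hx.1; have h2 := hx.2
        have : δ < e1 := by
          have : min (min e1 e2) (u - a) ≤ e1 := le_trans (min_le_left _ _) (min_le_left _ _)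
          linarith
        linarith
  have hmono : StrictMonoOn f (Set.Icc a (a + δ)) := by
    apply strictMonoOn_of_deriv_pos (convex_Icc _ _)
    · intro x hx
      exact (H1 (hsub hx)).continuousAt.continuousWithinAt
    · intro x hx
      rw [interior_Icc] at hx
      have hx1 : x ∈ Set.Ioo a u := by
        constructor
        · exact hx.1
        · have : δ < u - a := by
            have : min (min e1 e2) (u - a) ≤ u - a := min_le_right _ _
            linarith
          have := hx.2
          linarith
      rw [(H1 (hsub ⟨hx.1.le, hx.2.le⟩)).deriv]
      exact H3 hx1
  have hlt : f a < f (a + δ) :=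
    hmono (Set.left_mem_Icc.2 (by linarith)) (Set.right_mem_Icc.2 (by linarith)) (by linarith)
  have hle : f (a + δ) ≤ f a := by
    apply H2 (y := a + δ)
    rw [Real.dist_eq]
    have : δ < e2 := by
      have : min (min e1 e2) (u - a) ≤ e2 := le_trans (min_le_left _ _) (min_le_right _ _)
      linarith
    rw [abs_lt]; constructor <;> linarith
  linarith

lemma second_test_min {f f' : ℝ → ℝ} {a b : ℝ}
    (hf : ∀ᶠ x in 𝓝 a, HasDerivAt f (f' x) x)
    (hf' : HasDerivAt f' b a)
    (hmin : IsLocalMin f a) : f' a = 0 ∧ 0 ≤ b := by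
  have := second_test_max (f := fun x => -f x) (f' := fun x => -f' x) (a := a) (b := -b)
    (by filter_upwards [hf] with x hx using hx.neg) hf'.neg hmin.neg
  constructor
  · have := this.1; simpa using (neg_eq_zero.1 this)
  · linarith [this.2]

-- no C² test function can touch v from below at x = 1
lemma no_touch (φ : ℝ → ℝ) (hφ : ContDiff ℝ 2 φ)
    (hmin : IsLocalMinOn (fun x => -Real.sqrt (1 - x ^ 2) - φ x) (Set.Icc 0 1) 1) : False := by
  set c := deriv φ 1 with hc
  have hd : HasDerivAt φ c 1 := (hφ.differentiable (by norm_num)).differentiableAt.hasDerivAt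
  have hs := hasDerivAt_iff_tendsto_slope.1 hd
  set F := 𝓝[Set.Ioo (0:ℝ) 1] (1:ℝ) with hF
  have hne : F.NeBot := by
    rw [hF]
    apply mem_closure_iff_nhdsWithin_neBot.1
    rw [closure_Ioo (by norm_num : (0:ℝ) ≠ 1)]
    exact Set.right_mem_Icc.2 (by norm_num)
  have hF1 : F ≤ 𝓝[Set.Icc (0:ℝ) 1] 1 := nhdsWithin_mono _ Set.Ioo_subset_Icc_self
  have hF2 : F ≤ 𝓝[≠] (1:ℝ) := nhdsWithin_mono _ (fun x hx => ne_of_lt hx.2)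
  have hF3 : F ≤ 𝓝 (1:ℝ) := nhdsWithin_le_nhds
  set C : ℝ := |c| + 1 with hCdef
  have hC : 0 < C := by positivity
  have E1 : ∀ᶠ x in F, -Real.sqrt (1 - 1 ^ 2) - φ 1 ≤ -Real.sqrt (1 - x ^ 2) - φ x :=
    (hmin : ∀ᶠ x in 𝓝[Set.Icc (0:ℝ) 1] 1, _ ≤ _).filter_mono hF1
  have E2 : ∀ᶠ x in F, |slope φ 1 x - c| < 1 := by
    have hev : ∀ᶠ y in 𝓝 c, |y - c| < 1 := by
      filter_upwards [Metric.ball_mem_nhds c one_pos] with y hy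
      rwa [Metric.mem_ball, Real.dist_eq] at hy
    exact (hs.eventually hev).filter_mono hF2
  have E3 : ∀ᶠ x in F, x ∈ Set.Ioo (0:ℝ) 1 := self_mem_nhdsWithin
  have E4 : ∀ᶠ x in F, 1 - x < 1 / C ^ 2 := by
    apply Filter.Eventually.filter_mono hF3
    have ht : Filter.Tendsto (fun x : ℝ => 1 - x) (𝓝 1) (𝓝 0) := by
      have h := Filter.Tendsto.const_sub (1:ℝ) (tendsto_id (x := 𝓝 (1:ℝ)))
      simpa using h
    exact ht.eventually (eventually_lt_nhds (by positivity))
  obtain ⟨x, h1, h2, h3, h4⟩ := (E1.and (E2.and (E3.and E4))).exists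
  have hx0 : 0 < x := h3.1
  have hx1 : x < 1 := h3.2
  have hh : 0 < 1 - x := by linarith
  -- from h1 : φ 1 - φ x ≥ √(1 - x²) ≥ √(1 - x)
  have hs0 : Real.sqrt (1 - 1 ^ 2) = 0 := by norm_num
  rw [hs0] at h1
  have key1 : Real.sqrt (1 - x) ≤ φ 1 - φ x := by
    have hle : Real.sqrt (1 - x) ≤ Real.sqrt (1 - x ^ 2) := by
      apply Real.sqrt_le_sqrt
      nlinarith
    linarith [h1, hle]
  -- from h2 : φ 1 - φ x < C * (1 - x)
  have hslope : slope φ 1 x = (φ 1 - φ x) / (1 - x) := by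
    rw [slope_def_field]
    rw [div_eq_div_iff (by linarith) (by linarith)]
    ring
  rw [hslope] at h2
  have key2 : φ 1 - φ x < C * (1 - x) := by
    have habs : (φ 1 - φ x) / (1 - x) < c + 1 := by
      have := abs_lt.1 h2
      linarith [this.2]
    have hcC : c + 1 ≤ C := by
      rw [hCdef]; linarith [le_abs_self c]
    have := (div_lt_iff₀ hh).1 (lt_of_lt_of_le habs hcC)
    linarith
  -- contradiction
  set A := Real.sqrt (1 - x) with hA
  have hA0 : 0 < A := Real.sqrt_pos.2 hh
  have hAA : A * A = 1 - x := Real.mul_self_sqrt hh.le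
  have hC2 : C ^ 2 * (1 - x) < 1 := by
    have h5 := mul_lt_mul_of_pos_left h4 (pow_pos hC 2)
    rwa [mul_one_div, div_self (by positivity : (C:ℝ) ^ 2 ≠ 0)] at h5
  have hCA : C * A < 1 := by
    have hq : (C * A) * (C * A) = C ^ 2 * (1 - x) := by rw [← hAA]; ring
    nlinarith [mul_pos hC hA0, hq, hC2]
  have hfin : C * (1 - x) = (C * A) * A := by rw [← hAA]; ring
  have h6 := mul_lt_mul_of_pos_right hCA hA0
  rw [one_mul] at h6
  linarith [key1, key2, hfin, h6]


/-- Lower envelope `F_*` of the generalized Dirichlet operator for the prescribed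
Gaussian curvature equation `-u'' + (1 + (u')²)^{3/2} = 0` on `(0,1)` with boundary
conditions `u(0) = -1`, `u(1) = 1`. -/
noncomputable def GCLower (x u p X : ℝ) : ℝ :=
  if x ∈ Set.Ioo (0:ℝ) 1 then -X + (1 + p ^ 2) ^ ((3:ℝ)/2)
  else if x = 0 then min (u + 1) (-X + (1 + p ^ 2) ^ ((3:ℝ)/2))
  else min (u - 1) (-X + (1 + p ^ 2) ^ ((3:ℝ)/2))

/-- Upper envelope `F^*` of the generalized Dirichlet operator for the prescribed
Gaussian curvature equation on `(0,1)` with boundary conditions `u(0) = -1`, `u(1) = 1`. -/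
noncomputable def GCUpper (x u p X : ℝ) : ℝ :=
  if x ∈ Set.Ioo (0:ℝ) 1 then -X + (1 + p ^ 2) ^ ((3:ℝ)/2)
  else if x = 0 then max (u + 1) (-X + (1 + p ^ 2) ^ ((3:ℝ)/2))
  else max (u - 1) (-X + (1 + p ^ 2) ^ ((3:ℝ)/2))

/-- Viscosity subsolution of the generalized Dirichlet problem for the prescribed
Gaussian curvature equation on `[0,1]`. -/
def IsGCSubsolution (u : ℝ → ℝ) : Prop :=
  UpperSemicontinuousOn u (Set.Icc 0 1) ∧
  ∀ φ : ℝ → ℝ, ContDiff ℝ 2 φ → ∀ x₀ ∈ Set.Icc (0:ℝ) 1,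
    IsLocalMaxOn (fun x => u x - φ x) (Set.Icc 0 1) x₀ →
      GCLower x₀ (u x₀) (deriv φ x₀) (deriv (deriv φ) x₀) ≤ 0

/-- Viscosity supersolution of the generalized Dirichlet problem for the prescribed
Gaussian curvature equation on `[0,1]`. -/
def IsGCSupersolution (w : ℝ → ℝ) : Prop :=
  LowerSemicontinuousOn w (Set.Icc 0 1) ∧
  ∀ φ : ℝ → ℝ, ContDiff ℝ 2 φ → ∀ x₀ ∈ Set.Icc (0:ℝ) 1,
    IsLocalMinOn (fun x => w x - φ x) (Set.Icc 0 1) x₀ →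
      0 ≤ GCUpper x₀ (w x₀) (deriv φ x₀) (deriv (deriv φ) x₀)

/-- **Failure of the strong comparison principle in one dimension**: for the generalized
Dirichlet problem for the prescribed Gaussian curvature equation on `(0,1)` with boundary
conditions `u(0) = -1`, `u(1) = 1`, the function equal to `-√(1 - x²)` on `[0,1)` and `1`
at `x = 1` is a viscosity subsolution, `v(x) = -√(1 - x²)` is a viscosity supersolution,
and the subsolution strictly exceeds the supersolution at `x = 1`. -/
theorem gaussian_curvature_strong_comparison_fails :
    IsGCSubsolution (fun x : ℝ => if x < 1 then -Real.sqrt (1 - x ^ 2) else 1) ∧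
    IsGCSupersolution (fun x : ℝ => -Real.sqrt (1 - x ^ 2)) ∧
    (fun x : ℝ => if x < 1 then -Real.sqrt (1 - x ^ 2) else 1) 1 = 1 ∧
    (fun x : ℝ => -Real.sqrt (1 - x ^ 2)) 1 = 0 ∧
    (∃ x₀ ∈ Set.Icc (0:ℝ) 1,
      (fun x : ℝ => -Real.sqrt (1 - x ^ 2)) x₀
        < (fun x : ℝ => if x < 1 then -Real.sqrt (1 - x ^ 2) else 1) x₀) := by
  
  have hcont : Continuous (fun x : ℝ => -Real.sqrt (1 - x ^ 2)) :=
    (Real.continuous_sqrt.comp (continuous_const.sub (continuous_pow 2))).neg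
  refine ⟨⟨?_, ?_⟩, ⟨?_, ?_⟩, ?_, ?_, ?_⟩
  · -- USC of u
    intro x hx
    by_cases hx1 : x < 1
    · intro y hy
      have hy' : -Real.sqrt (1 - x ^ 2) < y := by simpa [hx1] using hy
      have hev1 : ∀ᶠ x' in 𝓝 x, -Real.sqrt (1 - x' ^ 2) < y :=
        hcont.continuousAt.eventually (eventually_lt_nhds hy')
      have hev2 : ∀ᶠ x' in 𝓝 x, x' < 1 := eventually_lt_nhds hx1
      apply Filter.Eventually.filter_mono nhdsWithin_le_nhds
      filter_upwards [hev1, hev2] with x' h1 h2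
      simpa [h2] using h1
    · have hx1' : x = 1 := le_antisymm hx.2 (not_lt.1 hx1)
      intro y hy
      have hy1 : (1:ℝ) < y := by
        subst hx1'
        simpa using hy
      apply Filter.Eventually.of_forall
      intro x'
      by_cases h : x' < 1
      · simp only [if_pos h]
        have := Real.sqrt_nonneg (1 - x' ^ 2)
        linarith
      · simp only [if_neg h]; exact hy1
  · -- subsolution test condition
    intro φ hφ x₀ hx₀ hmax
    have hφd : ∀ x : ℝ, HasDerivAt φ (deriv φ x) x := fun x =>
      ((hφ.differentiable (by norm_num)) x).hasDerivAt
    have hφ2 : ContDiff ℝ ((1:ℕ)+1) φ := by exact_mod_cast hφ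
    have hφ1 : ContDiff ℝ 1 (deriv φ) := (contDiff_succ_iff_deriv.mp hφ2).2.2
    have hφ1d : HasDerivAt (deriv φ) (deriv (deriv φ) x₀) x₀ :=
      ((hφ1.differentiable one_ne_zero) x₀).hasDerivAt
    by_cases h0 : x₀ = 0
    · subst h0
      have hnot : (0:ℝ) ∉ Set.Ioo (0:ℝ) 1 := by simp
      rw [GCLower, if_neg hnot, if_pos rfl]
      apply le_trans (min_le_left _ _)
      norm_num
    by_cases h1 : x₀ = 1
    · subst h1
      have hnot : (1:ℝ) ∉ Set.Ioo (0:ℝ) 1 := by simp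
      rw [GCLower, if_neg hnot, if_neg (by norm_num)]
      apply le_trans (min_le_left _ _)
      norm_num
    · have hxI : x₀ ∈ Set.Ioo (0:ℝ) 1 :=
        ⟨lt_of_le_of_ne hx₀.1 (Ne.symm h0), lt_of_le_of_ne hx₀.2 h1⟩
      have hxI' : x₀ ∈ Set.Ioo (-1:ℝ) 1 := ⟨by linarith [hxI.1], hxI.2⟩
      have hnb : 𝓝[Set.Icc (0:ℝ) 1] x₀ = 𝓝 x₀ :=
        nhdsWithin_eq_nhds.2 (Icc_mem_nhds hxI.1 hxI.2)
      have hmax0 : ∀ᶠ x in 𝓝[Set.Icc (0:ℝ) 1] x₀,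
          ((if x < 1 then -Real.sqrt (1 - x ^ 2) else 1) - φ x)
            ≤ ((if x₀ < 1 then -Real.sqrt (1 - x₀ ^ 2) else 1) - φ x₀) := hmax
      rw [hnb] at hmax0
      have hmax1 : IsLocalMax (fun x => -Real.sqrt (1 - x ^ 2) - φ x) x₀ := by
        have hev2 : ∀ᶠ x in 𝓝 x₀, x < 1 := eventually_lt_nhds hxI.2
        filter_upwards [hmax0, hev2] with x hxle hxlt
        rw [if_pos hxlt, if_pos hxI.2] at hxle
        exact hxle
      obtain ⟨hz, hb⟩ := second_test_max
        (f := fun x => -Real.sqrt (1 - x ^ 2) - φ x)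
        (f' := fun x => gfun x - deriv φ x)
        (b := (Real.sqrt (1 - x₀ ^ 2))⁻¹ ^ 3 - deriv (deriv φ) x₀)
        (by
          filter_upwards [isOpen_Ioo.eventually_mem hxI'] with x hx
          exact (hv_deriv' hx).sub (hφd x))
        ((hg_deriv' hxI').sub hφ1d) hmax1
      have hderiv : deriv φ x₀ = gfun x₀ := (sub_eq_zero.1 hz).symm
      rw [GCLower, if_pos hxI, hderiv, veq' hxI']
      have hu : (if x₀ < 1 then -Real.sqrt (1 - x₀ ^ 2) else 1) = -Real.sqrt (1 - x₀ ^ 2) :=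
        if_pos hxI.2
      linarith [hb]
  · -- LSC of v
    exact fun x _ => (hcont.lowerSemicontinuous.lowerSemicontinuousAt x).lowerSemicontinuousWithinAt _
  · -- supersolution test condition
    intro φ hφ x₀ hx₀ hmin
    have hφd : ∀ x : ℝ, HasDerivAt φ (deriv φ x) x := fun x =>
      ((hφ.differentiable (by norm_num)) x).hasDerivAt
    have hφ2 : ContDiff ℝ ((1:ℕ)+1) φ := by exact_mod_cast hφ
    have hφ1 : ContDiff ℝ 1 (deriv φ) := (contDiff_succ_iff_deriv.mp hφ2).2.2
    have hφ1d : HasDerivAt (deriv φ) (deriv (deriv φ) x₀) x₀ :=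
      ((hφ1.differentiable one_ne_zero) x₀).hasDerivAt
    by_cases h1 : x₀ = 1
    · subst h1
      exact absurd hmin (fun h => no_touch φ hφ h)
    by_cases h0 : x₀ = 0
    · subst h0
      have hnot : (0:ℝ) ∉ Set.Ioo (0:ℝ) 1 := by simp
      rw [GCUpper, if_neg hnot, if_pos rfl]
      apply le_trans _ (le_max_left _ _)
      norm_num
    · have hxI : x₀ ∈ Set.Ioo (0:ℝ) 1 :=
        ⟨lt_of_le_of_ne hx₀.1 (Ne.symm h0), lt_of_le_of_ne hx₀.2 h1⟩
      have hxI' : x₀ ∈ Set.Ioo (-1:ℝ) 1 := ⟨by linarith [hxI.1], hxI.2⟩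
      have hnb : 𝓝[Set.Icc (0:ℝ) 1] x₀ = 𝓝 x₀ :=
        nhdsWithin_eq_nhds.2 (Icc_mem_nhds hxI.1 hxI.2)
      have hmin0 : ∀ᶠ x in 𝓝[Set.Icc (0:ℝ) 1] x₀,
          (-Real.sqrt (1 - x₀ ^ 2) - φ x₀) ≤ (-Real.sqrt (1 - x ^ 2) - φ x) := hmin
      rw [hnb] at hmin0
      have hmin1 : IsLocalMin (fun x => -Real.sqrt (1 - x ^ 2) - φ x) x₀ := hmin0
      obtain ⟨hz, hb⟩ := second_test_min
        (f := fun x => -Real.sqrt (1 - x ^ 2) - φ x)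
        (f' := fun x => gfun x - deriv φ x)
        (b := (Real.sqrt (1 - x₀ ^ 2))⁻¹ ^ 3 - deriv (deriv φ) x₀)
        (by
          filter_upwards [isOpen_Ioo.eventually_mem hxI'] with x hx
          exact (hv_deriv' hx).sub (hφd x))
        ((hg_deriv' hxI').sub hφ1d) hmin1
      have hderiv : deriv φ x₀ = gfun x₀ := (sub_eq_zero.1 hz).symm
      rw [GCUpper, if_pos hxI, hderiv, veq' hxI']
      linarith [hb]
  · norm_num
  · norm_num
  · refine ⟨1, ⟨by norm_num, le_rfl⟩, ?_⟩
    norm_num
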